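/- Let σ be a permutation of {1,...,d} and let K^•_{m,μ}(σ) denote the number of sequences (σ_1,...,σ_m) of transpositions in S_d that form a monotone sequence (writing σ_i = (r_i s_i) with r_i < s_i, one has s_1 ≤ ... ≤ s_m) such that σσ_1⋯σ_m has cycle type μ. Then K^•_{m,μ}(σ) depends only on the cycle type of σ: if σ and σ' are conjugate in S_d, then K^•_{m,μ}(σ) = K^•_{m,μ}(σ'). -/

import Mathlib

open Equiv

namespace MonotoneCountAux

section Hv

variable {R : Type*} [Ring R]

/-- `Hv v m t` is the complete homogeneous "polynomial" of degree `m` in the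
(noncommuting, ordered) variables `v 0, …, v (t-1)`. -/
def Hv (v : ℕ → R) : ℕ → ℕ → R
  | 0, _ => 1
  | _ + 1, 0 => 0
  | m + 1, t + 1 => Hv v (m + 1) t + Hv v m (t + 1) * v t

@[simp] lemma Hv_zero (v : ℕ → R) (t : ℕ) : Hv v 0 t = 1 := by cases t <;> simp [Hv]

@[simp] lemma Hv_succ_zero (v : ℕ → R) (m : ℕ) : Hv v (m + 1) 0 = 0 := by simp [Hv]

lemma Hv_succ_succ (v : ℕ → R) (m t : ℕ) :
    Hv v (m + 1) (t + 1) = Hv v (m + 1) t + Hv v m (t + 1) * v t := by rw [Hv]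

lemma Hv_pos_zero (v : ℕ → R) {m : ℕ} (hm : 0 < m) : Hv v m 0 = 0 := by
  obtain ⟨m, rfl⟩ := Nat.exists_eq_add_of_lt hm
  simp [Nat.add_comm]

lemma Hv_congr {t : ℕ} {v w : ℕ → R} (h : ∀ x < t, v x = w x) (m : ℕ) :
    ∀ t' ≤ t, Hv v m t' = Hv w m t' := by
  induction m with
  | zero => intro t' _; simp
  | succ m ihm =>
    intro t' ht'
    induction t' with
    | zero => simp
    | succ t'' iht =>
      rw [Hv_succ_succ, Hv_succ_succ, iht (le_of_lt (Nat.lt_of_succ_le ht')),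
        ihm _ ht', h _ (Nat.lt_of_succ_le ht')]

lemma Hv_mem (S : Subring R) (v : ℕ → R) (hv : ∀ x, v x ∈ S) (m : ℕ) :
    ∀ t, Hv v m t ∈ S := by
  induction m with
  | zero => intro t; simpa using S.one_mem
  | succ m ihm =>
    intro t
    induction t with
    | zero => simpa using S.zero_mem
    | succ t iht =>
      rw [Hv_succ_succ]
      exact S.add_mem iht (S.mul_mem (ihm _) (hv t))

/-- Splitting of the complete homogeneous sum according to variables `< t₁` and `≥ t₁`. -/
lemma Hv_split (v : ℕ → R) (t₁ : ℕ) (m : ℕ) :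
    ∀ t₂, Hv v m (t₁ + t₂) =
      ∑ i ∈ Finset.range (m + 1), Hv v i t₁ * Hv (fun x => v (t₁ + x)) (m - i) t₂ := by
  induction m with
  | zero => intro t₂; simp
  | succ m ihm =>
    intro t₂
    induction t₂ with
    | zero =>
      have hz : ∀ i ∈ Finset.range (m + 1),
          Hv v i t₁ * Hv (fun x => v (t₁ + x)) (m + 1 - i) 0 = 0 := by
        intro i hi
        rw [Hv_pos_zero _ (Nat.sub_pos_of_lt (Finset.mem_range.mp hi)), mul_zero]
      rw [Finset.sum_range_succ, Finset.sum_eq_zero hz, Nat.sub_self, Hv_zero, mul_one,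
        zero_add]
      rfl
    | succ t₂ iht =>
      have key : ∀ i ∈ Finset.range (m + 1),
          Hv v i t₁ * Hv (fun x => v (t₁ + x)) (m + 1 - i) (t₂ + 1) =
            Hv v i t₁ * Hv (fun x => v (t₁ + x)) (m + 1 - i) t₂ +
              Hv v i t₁ * Hv (fun x => v (t₁ + x)) (m - i) (t₂ + 1) * v (t₁ + t₂) := by
        intro i hi
        have hmi : m + 1 - i = (m - i) + 1 :=
          Nat.succ_sub (Nat.lt_succ_iff.mp (Finset.mem_range.mp hi))
        rw [hmi, Hv_succ_succ, mul_add, mul_assoc]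
      have hS1T : Hv v (m + 1) (t₁ + t₂) =
          (∑ i ∈ Finset.range (m + 1), Hv v i t₁ * Hv (fun x => v (t₁ + x)) (m + 1 - i) t₂)
            + Hv v (m + 1) t₁ := by
        rw [iht, Finset.sum_range_succ, Nat.sub_self, Hv_zero, mul_one]
      have hS2 : (∑ i ∈ Finset.range (m + 1),
            Hv v i t₁ * Hv (fun x => v (t₁ + x)) (m - i) (t₂ + 1) * v (t₁ + t₂)) =
          Hv v m (t₁ + (t₂ + 1)) * v (t₁ + t₂) := by
        rw [ihm (t₂ + 1), Finset.sum_mul]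
      calc Hv v (m + 1) (t₁ + (t₂ + 1))
          = Hv v (m + 1) (t₁ + t₂) + Hv v m (t₁ + (t₂ + 1)) * v (t₁ + t₂) :=
            Hv_succ_succ v m (t₁ + t₂)
        _ = _ := by
            conv_rhs => rw [Finset.sum_range_succ, Finset.sum_congr rfl key,
              Finset.sum_add_distrib, Nat.sub_self, Hv_zero, mul_one]
            rw [hS1T, ← hS2]
            exact add_right_comm _ _ _

end Hv

section H2

variable {R : Type*} [Ring R]

/-- Complete homogeneous polynomial in two variables. -/
def h2 (x y : R) : ℕ → R
  | 0 => 1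
  | p + 1 => x ^ (p + 1) + h2 x y p * y

@[simp] lemma h2_zero (x y : R) : h2 x y 0 = 1 := rfl

lemma h2_succ (x y : R) (p : ℕ) : h2 x y (p + 1) = x ^ (p + 1) + h2 x y p * y := rfl

lemma h2_succ' (x y : R) (p : ℕ) : h2 x y (p + 1) = y ^ (p + 1) + x * h2 x y p := by
  induction p with
  | zero => simp [h2_succ, add_comm]
  | succ p ih =>
    have e1 : h2 x y p * y = h2 x y (p + 1) - x ^ (p + 1) := by rw [h2_succ]; abel
    calc h2 x y (p + 1 + 1)
        = x ^ (p + 1 + 1) + h2 x y (p + 1) * y := h2_succ x y (p + 1)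
      _ = x ^ (p + 1 + 1) + (y ^ (p + 1) + x * h2 x y p) * y := by rw [ih]
      _ = x ^ (p + 1 + 1) + (y ^ (p + 1) * y + x * (h2 x y p * y)) := by
          rw [add_mul, mul_assoc]
      _ = x ^ (p + 1 + 1) + (y ^ (p + 1 + 1) + x * (h2 x y (p + 1) - x ^ (p + 1))) := by
          rw [e1, ← pow_succ]
      _ = y ^ (p + 1 + 1) + x * h2 x y (p + 1) := by
          rw [mul_sub, ← pow_succ' x]; abel

lemma h2_comm_left (x y : R) (hc : x * y = y * x) (p : ℕ) :
    h2 x y p * x = x * h2 x y p := by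
  induction p with
  | zero => simp
  | succ p ih =>
    rw [h2_succ, add_mul, mul_add, mul_assoc (h2 x y p) y x, ← hc,
      ← mul_assoc (h2 x y p) x y, ih, mul_assoc, ← pow_succ, ← pow_succ']

lemma sx_pow (x y s : R) (hc : x * y = y * x) (hsx : s * x = y * s - 1) (n : ℕ) :
    s * x ^ (n + 1) = y ^ (n + 1) * s - h2 x y n := by
  induction n with
  | zero => simpa using hsx
  | succ n ih =>
    calc s * x ^ (n + 1 + 1)
        = (s * x ^ (n + 1)) * x := by rw [pow_succ, ← mul_assoc]
      _ = (y ^ (n + 1) * s) * x - h2 x y n * x := by rw [ih, sub_mul]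
      _ = y ^ (n + 1) * (y * s - 1) - x * h2 x y n := by
          rw [mul_assoc, hsx, h2_comm_left x y hc]
      _ = y ^ (n + 1 + 1) * s - (y ^ (n + 1) + x * h2 x y n) := by
          rw [mul_sub, mul_one, ← mul_assoc, ← pow_succ]; abel
      _ = y ^ (n + 1 + 1) * s - h2 x y (n + 1) := by rw [← h2_succ']

lemma s_h2_comm (x y s : R) (hc : x * y = y * x)
    (hsx : s * x = y * s - 1) (hsy : s * y = x * s + 1) (p : ℕ) :
    s * h2 x y p = h2 x y p * s := by
  induction p with
  | zero => simp
  | succ p ih =>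
    calc s * h2 x y (p + 1)
        = s * x ^ (p + 1) + (s * h2 x y p) * y := by rw [h2_succ, mul_add, mul_assoc]
      _ = (y ^ (p + 1) * s - h2 x y p) + h2 x y p * (s * y) := by
          rw [sx_pow x y s hc hsx, ih, mul_assoc]
      _ = y ^ (p + 1) * s - h2 x y p + (h2 x y p * (x * s) + h2 x y p) := by
          rw [hsy, mul_add, mul_one]
      _ = (y ^ (p + 1) + x * h2 x y p) * s := by
          rw [← mul_assoc, h2_comm_left x y hc, add_mul]; abel
      _ = h2 x y (p + 1) * s := by rw [← h2_succ']

end H2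

section GroupAlg

variable {d : ℕ}

/-- The group algebra of `Perm (Fin d)` over `ℤ`. -/
abbrev A (d : ℕ) := MonoidAlgebra ℤ (Equiv.Perm (Fin d))

/-- The canonical embedding of the group into its group algebra. -/
noncomputable def ι (g : Equiv.Perm (Fin d)) : A d := MonoidAlgebra.single g 1

lemma ι_mul (g h : Equiv.Perm (Fin d)) : ι (g * h) = ι g * ι h := by
  rw [ι, ι, ι, MonoidAlgebra.single_mul_single, mul_one]

@[simp] lemma ι_one : ι (1 : Equiv.Perm (Fin d)) = 1 := rfl

/-- The pairs indexing the Jucys–Murphy element `Jn t`. -/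
noncomputable def JPairs (d t : ℕ) : Finset (Fin d × Fin d) :=
  @Finset.filter _ (fun p => (p.1 : ℕ) < t ∧ (p.2 : ℕ) = t) (Classical.decPred _) Finset.univ

lemma mem_JPairs {t : ℕ} {p : Fin d × Fin d} :
    p ∈ JPairs d t ↔ (p.1 : ℕ) < t ∧ (p.2 : ℕ) = t := by
  simp [JPairs]

/-- The Jucys–Murphy element `J_t = ∑_{a < t} (a t)`. -/
noncomputable def Jn (d t : ℕ) : A d :=
  ∑ p ∈ JPairs d t, ι (Equiv.swap p.1 p.2)

/-- Conjugation invariance of the Jucys–Murphy elements. -/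
lemma conj_Jn (g : Equiv.Perm (Fin d)) (t : ℕ)
    (h1 : ∀ x : Fin d, (x : ℕ) = t → g x = x)
    (h2 : ∀ x : Fin d, ((g x : ℕ) < t ↔ (x : ℕ) < t)) :
    ι g * Jn d t = Jn d t * ι g := by
  rw [Jn, Finset.mul_sum, Finset.sum_mul]
  have hterm : ∀ p ∈ JPairs d t,
      ι g * ι (Equiv.swap p.1 p.2) = ι (Equiv.swap (g p.1) p.2) * ι g := by
    intro p hp
    rw [← ι_mul, ← ι_mul]
    congr 1
    have := Equiv.swap_apply_apply g p.1 p.2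
    rw [h1 p.2 (mem_JPairs.mp hp).2] at this
    rw [this, mul_assoc (g * Equiv.swap p.1 p.2) g⁻¹ g, inv_mul_cancel, mul_one]
  rw [Finset.sum_congr rfl hterm]
  apply Finset.sum_nbij' (fun p : Fin d × Fin d => ((g p.1, p.2) : Fin d × Fin d))
    (fun p : Fin d × Fin d => ((g⁻¹ p.1, p.2) : Fin d × Fin d))
  · intro p hp
    rw [mem_JPairs] at hp ⊢
    exact ⟨(h2 p.1).mpr hp.1, hp.2⟩
  · intro p hp
    rw [mem_JPairs] at hp ⊢
    refine ⟨?_, hp.2⟩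
    have := (h2 (g⁻¹ p.1)).mp
    rw [← Equiv.Perm.mul_apply g g⁻¹ p.1, mul_inv_cancel, Equiv.Perm.one_apply] at this
    exact this hp.1
  · intro p _; simp
  · intro p _; simp
  · intro p _; rfl

/-- A transposition of two elements below `t` commutes with `J_t`. -/
lemma commute_swap_Jn {t : ℕ} {u v : Fin d} (hu : (u : ℕ) < t) (hv : (v : ℕ) < t) :
    Commute (ι (Equiv.swap u v)) (Jn d t) := by
  have key : ∀ x : Fin d, ((Equiv.swap u v x : ℕ) < t ↔ (x : ℕ) < t) := by
    intro x
    by_cases hxu : x = u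
    · subst hxu; rw [Equiv.swap_apply_left]; exact iff_of_true hv hu
    by_cases hxv : x = v
    · subst hxv; rw [Equiv.swap_apply_right]; exact iff_of_true hu hv
    · rw [Equiv.swap_apply_of_ne_of_ne hxu hxv]
  exact conj_Jn _ t (fun x hx => Equiv.swap_apply_of_ne_of_ne
    (fun h => Nat.ne_of_lt hu (by rw [← h]; exact hx))
    (fun h => Nat.ne_of_lt hv (by rw [← h]; exact hx))) key

/-- The Jucys–Murphy elements pairwise commute. -/
lemma Jn_comm (d s t : ℕ) : Commute (Jn d s) (Jn d t) := by
  have key : ∀ s t : ℕ, s < t → Commute (Jn d s) (Jn d t) := by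
    intro s t hst
    apply Commute.sum_left
    intro p hp
    rw [mem_JPairs] at hp
    exact commute_swap_Jn (lt_trans (lt_of_lt_of_le hp.1 (le_of_eq hp.2.symm))
      (hp.2 ▸ hst)) (lt_of_le_of_lt (le_of_eq hp.2) hst)
  rcases lt_trichotomy s t with h | h | h
  · exact key s t h
  · exact h ▸ Commute.refl _
  · exact (key t s h).symm

end GroupAlg

section Adjacent

variable {d : ℕ}

lemma Jn_fin (b : Fin d) : Jn d (b : ℕ) = ∑ j ∈ Finset.Iio b, ι (Equiv.swap j b) := by
  rw [Jn]
  apply Finset.sum_nbij' (fun p : Fin d × Fin d => p.1) (fun j : Fin d => ((j, b) : Fin d × Fin d))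
  · intro p hp
    rw [mem_JPairs] at hp
    rw [Finset.mem_Iio]
    exact Fin.lt_def.mpr (hp.2 ▸ hp.1)
  · intro j hj
    rw [Finset.mem_Iio] at hj
    exact mem_JPairs.mpr ⟨Fin.lt_def.mp hj, rfl⟩
  · intro p hp
    rw [mem_JPairs] at hp
    have h2 : p.2 = b := Fin.val_injective hp.2
    rw [Prod.ext_iff]
    exact ⟨rfl, h2.symm⟩
  · intro j _; rfl
  · intro p hp
    rw [mem_JPairs] at hp
    have h2 : p.2 = b := Fin.val_injective hp.2
    rw [h2]

variable {a b : Fin d}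

lemma Iio_b_eq (hab : (b : ℕ) = (a : ℕ) + 1) : Finset.Iio b = insert a (Finset.Iio a) := by
  ext j
  rw [Finset.mem_insert, Finset.mem_Iio, Finset.mem_Iio, Fin.lt_def, Fin.lt_def, hab]
  constructor
  · intro h
    rcases Nat.lt_succ_iff_lt_or_eq.mp h with h' | h'
    · exact Or.inr h'
    · exact Or.inl (Fin.val_injective h')
  · rintro (rfl | h)
    · exact Nat.lt_succ_self _
    · exact Nat.lt_succ_of_lt h

lemma y_decomp (hab : (b : ℕ) = (a : ℕ) + 1) : Jn d (b : ℕ) = ι (Equiv.swap a b) + ∑ j ∈ Finset.Iio a, ι (Equiv.swap j b) := by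
  rw [Jn_fin, Iio_b_eq hab, Finset.sum_insert (by simp)]

lemma ne_of_mem_Iio (hab : (b : ℕ) = (a : ℕ) + 1) {j : Fin d} (hj : j ∈ Finset.Iio a) : j ≠ a ∧ j ≠ b := by
  rw [Finset.mem_Iio] at hj
  constructor
  · exact ne_of_lt hj
  · intro h
    have := Fin.lt_def.mp hj
    rw [h, hab] at this
    omega

lemma rel_sx (hab : (b : ℕ) = (a : ℕ) + 1) : ι (Equiv.swap a b) * Jn d (a : ℕ) =
    Jn d (b : ℕ) * ι (Equiv.swap a b) - 1 := by
  have hterm : ∀ j ∈ Finset.Iio a,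
      ι (Equiv.swap a b) * ι (Equiv.swap j a) = ι (Equiv.swap j b) * ι (Equiv.swap a b) := by
    intro j hj
    obtain ⟨hja, hjb⟩ := ne_of_mem_Iio hab hj
    rw [← ι_mul, ← ι_mul]
    congr 1
    have h := Equiv.swap_apply_apply (Equiv.swap a b) j a
    rw [Equiv.swap_apply_of_ne_of_ne hja hjb, Equiv.swap_apply_left, Equiv.swap_inv] at h
    rw [h, mul_assoc (Equiv.swap a b * Equiv.swap j a) (Equiv.swap a b) (Equiv.swap a b),
      Equiv.swap_mul_self, mul_one]
  rw [Jn_fin a, Finset.mul_sum, Finset.sum_congr rfl hterm, ← Finset.sum_mul,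
    y_decomp hab, add_mul, ← ι_mul, Equiv.swap_mul_self, ι_one]
  abel

lemma rel_sy (hab : (b : ℕ) = (a : ℕ) + 1) : ι (Equiv.swap a b) * Jn d (b : ℕ) =
    Jn d (a : ℕ) * ι (Equiv.swap a b) + 1 := by
  have hterm : ∀ j ∈ Finset.Iio a,
      ι (Equiv.swap a b) * ι (Equiv.swap j b) = ι (Equiv.swap j a) * ι (Equiv.swap a b) := by
    intro j hj
    obtain ⟨hja, hjb⟩ := ne_of_mem_Iio hab hj
    rw [← ι_mul, ← ι_mul]
    congr 1
    have h := Equiv.swap_apply_apply (Equiv.swap a b) j b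
    rw [Equiv.swap_apply_of_ne_of_ne hja hjb, Equiv.swap_apply_right, Equiv.swap_inv] at h
    rw [h, mul_assoc (Equiv.swap a b * Equiv.swap j b) (Equiv.swap a b) (Equiv.swap a b),
      Equiv.swap_mul_self, mul_one]
  rw [y_decomp hab, mul_add, ← ι_mul, Equiv.swap_mul_self, ι_one, Finset.mul_sum,
    Finset.sum_congr rfl hterm, ← Finset.sum_mul, ← Jn_fin a]
  abel

end Adjacent

section Central

variable {d : ℕ}

lemma Hv_one {R : Type*} [Ring R] (v : ℕ → R) (q : ℕ) : Hv v q 1 = (v 0) ^ q := by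
  induction q with
  | zero => simp
  | succ q ih => rw [Hv_succ_succ, Hv_succ_zero, zero_add, ih, pow_succ]

lemma Hv_two {R : Type*} [Ring R] (v : ℕ → R) (p : ℕ) : Hv v p 2 = h2 (v 0) (v 1) p := by
  induction p with
  | zero => simp
  | succ p ih =>
    rw [show (2 : ℕ) = 1 + 1 from rfl, Hv_succ_succ, Hv_one, ih, h2_succ]

/-- A transposition of two elements (weakly) above `t` commutes with `J_t`. -/
lemma commute_swap_Jn' {t : ℕ} {u v : Fin d} (hu : t < (u : ℕ)) (hv : t < (v : ℕ)) :
    Commute (ι (Equiv.swap u v)) (Jn d t) := by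
  apply conj_Jn
  · intro x hx
    exact Equiv.swap_apply_of_ne_of_ne (fun h => absurd (h ▸ hx) (by omega))
      (fun h => absurd (h ▸ hx) (by omega))
  · intro x
    by_cases hxu : x = u
    · subst hxu; rw [Equiv.swap_apply_left]
      exact iff_of_false (by omega) (by omega)
    by_cases hxv : x = v
    · subst hxv; rw [Equiv.swap_apply_right]
      exact iff_of_false (by omega) (by omega)
    · rw [Equiv.swap_apply_of_ne_of_ne hxu hxv]

/-- The full sum over monotone transposition sequences commutes with any adjacent
transposition. -/
lemma adj_commute (m : ℕ) {a b : Fin d} (hab : (b : ℕ) = (a : ℕ) + 1) :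
    Commute (ι (Equiv.swap a b)) (Hv (Jn d) m d) := by
  have hbd : (b : ℕ) < d := b.isLt
  have memS : ∀ z : A d, Commute (ι (Equiv.swap a b)) z →
      z ∈ Subring.centralizer ({ι (Equiv.swap a b)} : Set (A d)) := by
    intro z hz
    rw [Subring.mem_centralizer_iff]
    intro g hg
    rw [Set.mem_singleton_iff] at hg
    rw [hg]
    exact hz
  suffices h : Hv (Jn d) m d ∈ Subring.centralizer ({ι (Equiv.swap a b)} : Set (A d)) by
    rw [Subring.mem_centralizer_iff] at h
    exact h _ rfl
  have e1 : Hv (Jn d) m d = Hv (Jn d) m ((a : ℕ) + (d - (a : ℕ))) := by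
    rw [Nat.add_sub_cancel' (by omega : (a : ℕ) ≤ d)]
  rw [e1, Hv_split]
  apply Subring.sum_mem
  intro i _
  apply Subring.mul_mem
  · -- lower block: variables J_0, …, J_{k-1}
    have hcongr : Hv (Jn d) i (a : ℕ) =
        Hv (fun z => if z < (a : ℕ) then Jn d z else 0) i (a : ℕ) :=
      Hv_congr (fun z hz => by rw [if_pos hz]) i _ le_rfl
    rw [hcongr]
    apply Hv_mem
    intro z
    by_cases hzk : z < (a : ℕ)
    · rw [if_pos hzk]
      exact memS _ (commute_swap_Jn' (by omega) (by omega))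
    · rw [if_neg hzk]; exact Subring.zero_mem _
  · -- middle and upper blocks
    have e2 : Hv (fun x => Jn d ((a : ℕ) + x)) (m - i) (d - (a : ℕ)) =
        Hv (fun x => Jn d ((a : ℕ) + x)) (m - i) (2 + (d - (a : ℕ) - 2)) := by
      rw [show 2 + (d - (a : ℕ) - 2) = d - (a : ℕ) by omega]
    rw [e2, Hv_split]
    apply Subring.sum_mem
    intro j _
    apply Subring.mul_mem
    · -- middle block: variables J_k, J_{k+1}
      rw [Hv_two, Nat.add_zero, ← hab]
      exact memS _ (s_h2_comm _ _ _ (Jn_comm d _ _).eq (rel_sx hab) (rel_sy hab) j)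
    · -- upper block: variables J_{k+2}, …
      apply Hv_mem
      intro z
      exact memS _ (commute_swap_Jn (by omega) (by omega))

end Central

section FullCentral

variable {d : ℕ}

/-- The full monotone sum is central: it commutes with every group element. -/
lemma central (m : ℕ) (g : Equiv.Perm (Fin d)) :
    Commute (ι g) (Hv (Jn d) m d) := by
  set X := Hv (Jn d) m d with hX
  let T : Subgroup (Equiv.Perm (Fin d)) :=
    { carrier := {g | Commute (ι g) X}
      one_mem' := by simp [Set.mem_setOf_eq, Commute.one_left]
      mul_mem' := by
        intro g h hg hh
        simp only [Set.mem_setOf_eq] at *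
        rw [ι_mul]
        exact Commute.mul_left hg hh
      inv_mem' := by
        intro g hg
        simp only [Set.mem_setOf_eq] at *
        have h1 : ι g⁻¹ * ι g = 1 := by rw [← ι_mul, inv_mul_cancel, ι_one]
        have h2 : ι g * ι g⁻¹ = 1 := by rw [← ι_mul, mul_inv_cancel, ι_one]
        have : ι g⁻¹ * X = ι g⁻¹ * X * (ι g * ι g⁻¹) := by rw [h2, mul_one]
        calc ι g⁻¹ * X = ι g⁻¹ * X * (ι g * ι g⁻¹) := this
          _ = ι g⁻¹ * (X * ι g) * ι g⁻¹ := by noncomm_ring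
          _ = ι g⁻¹ * (ι g * X) * ι g⁻¹ := by rw [← hg.eq]
          _ = (ι g⁻¹ * ι g) * (X * ι g⁻¹) := by noncomm_ring
          _ = X * ι g⁻¹ := by rw [h1, one_mul] }
  -- adjacent transpositions lie in `T`
  have hadj : ∀ {u v : Fin d}, (v : ℕ) = (u : ℕ) + 1 → Equiv.swap u v ∈ T :=
    fun h => adj_commute m h
  -- all transpositions lie in `T`, by induction on the distance
  have hdist : ∀ n : ℕ, ∀ u v : Fin d, (v : ℕ) = (u : ℕ) + n + 1 → Equiv.swap u v ∈ T := by
    intro n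
    induction n with
    | zero => intro u v huv; exact hadj huv
    | succ n ih =>
      intro u v huv
      have hvd : (v : ℕ) < d := v.isLt
      set w : Fin d := ⟨(u : ℕ) + n + 1, by omega⟩ with hw
      have huw : (w : ℕ) = (u : ℕ) + n + 1 := rfl
      have hwv : (v : ℕ) = (w : ℕ) + 1 := by omega
      have huw' : u ≠ w := fun h => by
        have h2 := congrArg Fin.val h
        rw [huw] at h2
        omega
      have huv' : u ≠ v := fun h => by
        have h2 := congrArg Fin.val h
        omega
      have key : Equiv.swap u v =
          Equiv.swap w v * Equiv.swap u w * Equiv.swap w v := by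
        have h := Equiv.swap_apply_apply (Equiv.swap w v) u w
        rw [Equiv.swap_apply_of_ne_of_ne huw' huv', Equiv.swap_apply_left, Equiv.swap_inv] at h
        rw [h]
      rw [key]
      exact T.mul_mem (T.mul_mem (hadj hwv) (ih u w huw)) (hadj hwv)
  have hswap : ∀ u v : Fin d, u ≠ v → Equiv.swap u v ∈ T := by
    intro u v huv
    rcases lt_trichotomy (u : ℕ) (v : ℕ) with h | h | h
    · exact hdist ((v : ℕ) - (u : ℕ) - 1) u v (by omega)
    · exact absurd (Fin.val_injective h) huv
    · rw [Equiv.swap_comm]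
      exact hdist ((u : ℕ) - (v : ℕ) - 1) v u (by omega)
  have htop : g ∈ T := by
    have hT : Subgroup.closure {σ : Equiv.Perm (Fin d) | σ.IsSwap} ≤ T := by
      apply Subgroup.closure_le T |>.mpr
      rintro σ ⟨u, v, huv, rfl⟩
      exact hswap u v huv
    have := Equiv.Perm.closure_isSwap (α := Fin d)
    rw [this] at hT
    exact hT (Subgroup.mem_top g)
  exact htop

end FullCentral

section Combinatorial

variable {d : ℕ}

/-- The product of the transpositions encoded by a sequence of pairs. -/
def W {m : ℕ} (s : Fin m → Fin d × Fin d) : Equiv.Perm (Fin d) :=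
  (List.ofFn fun i => Equiv.swap (s i).1 (s i).2).prod

/-- Monotone sequences of `m` transpositions with all "tops" `< t`. -/
noncomputable def SFin (d m t : ℕ) : Finset (Fin m → Fin d × Fin d) :=
  @Finset.filter _
    (fun s => (∀ i, (s i).1 < (s i).2) ∧ (Monotone fun i => (s i).2) ∧
      ∀ i, ((s i).2 : ℕ) < t)
    (Classical.decPred _) Finset.univ

lemma mem_SFin {m t : ℕ} {s : Fin m → Fin d × Fin d} :
    s ∈ SFin d m t ↔ (∀ i, (s i).1 < (s i).2) ∧ (Monotone fun i => (s i).2) ∧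
      ∀ i, ((s i).2 : ℕ) < t := by
  rw [SFin, @Finset.mem_filter _ _ (Classical.decPred _)]
  simp only [Finset.mem_univ, true_and]

lemma monotone_snoc_iff {n : ℕ} {α : Type*} [Preorder α] {f : Fin n → α} {c : α} :
    Monotone (Fin.snoc f c : Fin (n + 1) → α) ↔ Monotone f ∧ ∀ i, f i ≤ c := by
  constructor
  · intro h
    constructor
    · intro i j hij
      have := h (Fin.castSucc_le_castSucc_iff.mpr hij)
      rwa [Fin.snoc_castSucc, Fin.snoc_castSucc] at this
    · intro i
      have := h (Fin.le_last (Fin.castSucc i))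
      rwa [Fin.snoc_castSucc, Fin.snoc_last] at this
  · rintro ⟨hf, hc⟩ i j hij
    rcases Fin.eq_castSucc_or_eq_last j with ⟨j', rfl⟩ | rfl
    · have hi : i < Fin.last n := lt_of_le_of_lt hij (Fin.castSucc_lt_last j')
      rcases Fin.eq_castSucc_or_eq_last i with ⟨i', rfl⟩ | rfl
      · rw [Fin.snoc_castSucc, Fin.snoc_castSucc]
        exact hf (Fin.castSucc_le_castSucc_iff.mp hij)
      · exact absurd hi (lt_irrefl _)
    · rw [Fin.snoc_last]
      rcases Fin.eq_castSucc_or_eq_last i with ⟨i', rfl⟩ | rfl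
      · rw [Fin.snoc_castSucc]; exact hc i'
      · rw [Fin.snoc_last]

lemma W_snoc {m : ℕ} (g : Fin m → Fin d × Fin d) (p : Fin d × Fin d) :
    W (Fin.snoc g p) = W g * Equiv.swap p.1 p.2 := by
  have h : (fun i : Fin m =>
      Equiv.swap ((Fin.snoc g p : Fin (m + 1) → Fin d × Fin d) (Fin.castSucc i)).1
        ((Fin.snoc g p : Fin (m + 1) → Fin d × Fin d) (Fin.castSucc i)).2) =
      fun i : Fin m => Equiv.swap (g i).1 (g i).2 := by
    funext i
    rw [Fin.snoc_castSucc]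
  rw [W, W, List.ofFn_succ', List.prod_concat, Fin.snoc_last, h]

/-- The generating-element identity: the sum of `ι (W s)` over monotone sequences equals
the complete homogeneous element in the Jucys–Murphy elements. -/
lemma sum_SFin (m : ℕ) : ∀ t, (∑ s ∈ SFin d m t, ι (W s)) = Hv (Jn d) m t := by
  induction m with
  | zero =>
    intro t
    have huniv : SFin d 0 t = Finset.univ := by
      apply Finset.eq_univ_of_forall
      intro s
      exact mem_SFin.mpr ⟨fun i => i.elim0, fun i => i.elim0, fun i => i.elim0⟩
    rw [huniv, Hv_zero]
    rw [Finset.sum_eq_single (fun i => i.elim0)]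
    · rw [W]; simp [List.ofFn_zero]
    · intro b _ hb
      exact absurd (funext fun i => i.elim0) hb
    · intro h
      exact absurd (Finset.mem_univ _) h
  | succ m ihm =>
    intro t
    induction t with
    | zero =>
      have he : SFin d (m + 1) 0 = ∅ := Finset.eq_empty_of_forall_notMem fun s hs => by
        have := (mem_SFin.mp hs).2.2 0
        omega
      rw [Hv_succ_zero, he, Finset.sum_empty]
    | succ t iht =>
      classical
      have snd_snoc : ∀ (g : Fin m → Fin d × Fin d) (p : Fin d × Fin d),
          (fun i => ((Fin.snoc g p : Fin (m+1) → Fin d × Fin d) i).2) =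
            Fin.snoc (fun i => (g i).2) p.2 := by
        intro g p
        funext i
        refine Fin.lastCases ?_ (fun j => ?_) i
        · rw [Fin.snoc_last, Fin.snoc_last]
        · rw [Fin.snoc_castSucc, Fin.snoc_castSucc]
      rw [Hv_succ_succ, ← iht, ← ihm (t + 1), ← Finset.sum_filter_add_sum_filter_not
        (SFin d (m + 1) (t + 1)) (fun s => ((s (Fin.last m)).2 : ℕ) < t) (fun s => ι (W s))]
      congr 1
      · -- sequences with all tops `< t`
        apply Finset.sum_congr _ (fun _ _ => rfl)
        ext s
        rw [Finset.mem_filter, mem_SFin, mem_SFin]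
        constructor
        · rintro ⟨⟨h1, h2, h3⟩, h4⟩
          refine ⟨h1, h2, fun i => ?_⟩
          have hle : ((s i).2 : ℕ) ≤ ((s (Fin.last m)).2 : ℕ) := h2 (Fin.le_last i)
          omega
        · rintro ⟨h1, h2, h3⟩
          exact ⟨⟨h1, h2, fun i => Nat.lt_succ_of_lt (h3 i)⟩, h3 (Fin.last m)⟩
      · -- sequences whose last top is exactly `t`
        calc (∑ s ∈ Finset.filter (fun s => ¬ ((s (Fin.last m)).2 : ℕ) < t)
                (SFin d (m + 1) (t + 1)), ι (W s))
            = ∑ x ∈ (SFin d m (t + 1)) ×ˢ (JPairs d t),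
                ι (W x.1 * Equiv.swap x.2.1 x.2.2) := by
              apply Finset.sum_nbij' (fun s => (Fin.init s, s (Fin.last m)))
                (fun x => Fin.snoc x.1 x.2)
              · intro s hs
                rw [Finset.mem_filter, mem_SFin] at hs
                obtain ⟨⟨h1, h2, h3⟩, h4⟩ := hs
                have ht : ((s (Fin.last m)).2 : ℕ) = t := by
                  have := h3 (Fin.last m); omega
                rw [Finset.mem_product]
                constructor
                · rw [mem_SFin]
                  exact ⟨fun i => h1 _, fun i j hij =>
                    h2 (Fin.castSucc_le_castSucc_iff.mpr hij), fun i => h3 _⟩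
                · rw [mem_JPairs]
                  refine ⟨?_, ht⟩
                  show ((s (Fin.last m)).1 : ℕ) < t
                  have := Fin.lt_def.mp (h1 (Fin.last m))
                  omega
              · intro x hx
                rw [Finset.mem_product, mem_SFin, mem_JPairs] at hx
                obtain ⟨⟨h1, h2, h3⟩, h4, h5⟩ := hx
                rw [Finset.mem_filter, mem_SFin]
                refine ⟨⟨?_, ?_, ?_⟩, ?_⟩
                · intro i
                  refine Fin.lastCases ?_ (fun j => ?_) i
                  · rw [Fin.snoc_last]
                    exact Fin.lt_def.mpr (by omega)
                  · rw [Fin.snoc_castSucc]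
                    exact h1 j
                · rw [snd_snoc]
                  refine monotone_snoc_iff.mpr ⟨h2, fun i => ?_⟩
                  rw [Fin.le_def]
                  have := h3 i
                  omega
                · intro i
                  refine Fin.lastCases ?_ (fun j => ?_) i
                  · rw [Fin.snoc_last]; omega
                  · rw [Fin.snoc_castSucc]
                    exact h3 j
                · rw [Fin.snoc_last]
                  omega
              · intro s _
                exact Fin.snoc_init_self s
              · intro x hx
                rw [Fin.init_snoc, Fin.snoc_last]
              · intro s _
                have hW := W_snoc (Fin.init s) (s (Fin.last m))
                rw [Fin.snoc_init_self] at hW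
                rw [hW]
          _ = ∑ g ∈ SFin d m (t + 1), ∑ p ∈ JPairs d t,
                ι (W g * Equiv.swap p.1 p.2) := Finset.sum_product _ _ _
          _ = ∑ g ∈ SFin d m (t + 1), ι (W g) * Jn d t := by
              apply Finset.sum_congr rfl
              intro g _
              rw [Jn, Finset.mul_sum]
              exact Finset.sum_congr rfl fun p _ => ι_mul _ _
          _ = (∑ g ∈ SFin d m (t + 1), ι (W g)) * Jn d t := (Finset.sum_mul _ _ _).symm

end Combinatorial

section Final

variable {d : ℕ}

/-- The permutations with cycle type `μ`. -/
noncomputable def Xi (d : ℕ) (μ : Multiset ℕ) : Finset (Equiv.Perm (Fin d)) :=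
  @Finset.filter _ (fun π => π.cycleType = μ) (Classical.decPred _) Finset.univ

lemma mem_Xi {μ : Multiset ℕ} {π : Equiv.Perm (Fin d)} :
    π ∈ Xi d μ ↔ π.cycleType = μ := by
  rw [Xi, @Finset.mem_filter _ _ (Classical.decPred _)]
  simp only [Finset.mem_univ, true_and]

lemma count_eq (m : ℕ) (μ : Multiset ℕ) (σ : Equiv.Perm (Fin d)) :
    ((@Finset.filter _ (fun s : Fin m → Fin d × Fin d =>
        (∀ i, (s i).1 < (s i).2) ∧ (Monotone fun i => (s i).2) ∧
          (σ * W s).cycleType = μ) (Classical.decPred _) Finset.univ).card : ℤ) =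
      ∑ π ∈ Xi d μ, (ι σ * Hv (Jn d) m d).coeff π := by
  classical
  rw [Finset.filter_congr_decidable]
  have hset : Finset.filter
      (fun s : Fin m → Fin d × Fin d => (∀ i, (s i).1 < (s i).2) ∧
        (Monotone fun i => (s i).2) ∧ (σ * W s).cycleType = μ) Finset.univ =
      Finset.filter (fun s => (σ * W s).cycleType = μ) (SFin d m d) := by
    ext s
    rw [Finset.mem_filter, Finset.mem_filter, mem_SFin]
    simp only [Finset.mem_univ, true_and]
    constructor
    · rintro ⟨h1, h2, h4⟩
      exact ⟨⟨h1, h2, fun i => (s i).2.isLt⟩, h4⟩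
    · rintro ⟨⟨h1, h2, _⟩, h4⟩
      exact ⟨h1, h2, h4⟩
  rw [hset, ← Finset.sum_boole]
  calc (∑ s ∈ SFin d m d, if (σ * W s).cycleType = μ then (1 : ℤ) else 0)
      = ∑ s ∈ SFin d m d, ∑ π ∈ Xi d μ, (ι (σ * W s)).coeff π := by
        apply Finset.sum_congr rfl
        intro s _
        have : ∀ π ∈ Xi d μ, (ι (σ * W s)).coeff π =
            if σ * W s = π then (1 : ℤ) else 0 := by
          intro π _
          rw [ι]
          exact Finsupp.single_apply
        rw [Finset.sum_congr rfl this, Finset.sum_ite_eq]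
        exact (if_congr mem_Xi rfl rfl).symm
    _ = ∑ π ∈ Xi d μ, ∑ s ∈ SFin d m d, (ι (σ * W s)).coeff π := Finset.sum_comm
    _ = ∑ π ∈ Xi d μ, (ι σ * Hv (Jn d) m d).coeff π := by
        apply Finset.sum_congr rfl
        intro π _
        rw [← Finset.sum_apply', ← MonoidAlgebra.coeff_sum]
        congr 2
        rw [← sum_SFin m d, Finset.mul_sum]
        exact Finset.sum_congr rfl fun s _ => ι_mul σ (W s)

lemma sum_conj (m : ℕ) (μ : Multiset ℕ) (τ σ : Equiv.Perm (Fin d)) :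
    (∑ π ∈ Xi d μ, (ι (τ * σ * τ⁻¹) * Hv (Jn d) m d).coeff π) =
      ∑ π ∈ Xi d μ, (ι σ * Hv (Jn d) m d).coeff π := by
  have hY : ι (τ * σ * τ⁻¹) * Hv (Jn d) m d =
      ι τ * (ι σ * Hv (Jn d) m d) * ι τ⁻¹ := by
    rw [ι_mul, ι_mul]
    calc ι τ * ι σ * ι τ⁻¹ * Hv (Jn d) m d
        = ι τ * ι σ * (ι τ⁻¹ * Hv (Jn d) m d) := by rw [mul_assoc]
      _ = ι τ * ι σ * (Hv (Jn d) m d * ι τ⁻¹) := by rw [(central m τ⁻¹).eq]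
      _ = ι τ * (ι σ * Hv (Jn d) m d) * ι τ⁻¹ := by noncomm_ring
  rw [hY]
  have happ : ∀ π : Equiv.Perm (Fin d),
      (ι τ * (ι σ * Hv (Jn d) m d) * ι τ⁻¹).coeff π =
        (ι σ * Hv (Jn d) m d).coeff (τ⁻¹ * (π * τ)) := by
    intro π
    rw [show ι τ⁻¹ = MonoidAlgebra.single τ⁻¹ (1 : ℤ) from rfl,
      MonoidAlgebra.mul_single_apply, inv_inv,
      show ι τ = MonoidAlgebra.single τ (1 : ℤ) from rfl,
      MonoidAlgebra.single_mul_apply, one_mul, mul_one]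
  rw [Finset.sum_congr rfl fun π _ => happ π]
  apply Finset.sum_nbij' (fun π => τ⁻¹ * (π * τ)) (fun ρ => τ * ρ * τ⁻¹)
  · intro π hπ
    rw [mem_Xi] at hπ ⊢
    rw [show τ⁻¹ * (π * τ) = τ⁻¹ * π * (τ⁻¹)⁻¹ by group]
    rw [Equiv.Perm.cycleType_conj]
    exact hπ
  · intro ρ hρ
    rw [mem_Xi] at hρ ⊢
    rw [Equiv.Perm.cycleType_conj]
    exact hρ
  · intro π _; group
  · intro ρ _; group
  · intro π _; rfl

end Final

end MonotoneCountAux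

open MonotoneCountAux in
/-- The number of monotone sequences of `m` transpositions `σ_1, …, σ_m` in `S_d`
such that `σσ_1⋯σ_m` has cycle type `μ` depends only on the cycle type of `σ`:
conjugate permutations yield equal counts. -/
theorem monotone_count_depends_only_on_cycle_type (d m : ℕ) (μ : Multiset ℕ)
    (σ σ' : Equiv.Perm (Fin d)) (hconj : IsConj σ σ') :
    Nat.card {s : Fin m → Fin d × Fin d //
        (∀ i, (s i).1 < (s i).2) ∧ (Monotone fun i => (s i).2) ∧
        (σ * (List.ofFn fun i => Equiv.swap (s i).1 (s i).2).prod).cycleType = μ} =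
      Nat.card {s : Fin m → Fin d × Fin d //
        (∀ i, (s i).1 < (s i).2) ∧ (Monotone fun i => (s i).2) ∧
        (σ' * (List.ofFn fun i => Equiv.swap (s i).1 (s i).2).prod).cycleType = μ} := by
  classical
  obtain ⟨τ, hτ⟩ := isConj_iff.mp hconj
  have key : ∀ ν : Equiv.Perm (Fin d),
      Nat.card {s : Fin m → Fin d × Fin d //
        (∀ i, (s i).1 < (s i).2) ∧ (Monotone fun i => (s i).2) ∧
        (ν * (List.ofFn fun i => Equiv.swap (s i).1 (s i).2).prod).cycleType = μ} =
      (@Finset.filter _ (fun s : Fin m → Fin d × Fin d =>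
        (∀ i, (s i).1 < (s i).2) ∧ (Monotone fun i => (s i).2) ∧
          (ν * MonotoneCountAux.W s).cycleType = μ)
        (Classical.decPred _) Finset.univ).card := by
    intro ν
    rw [Nat.card_eq_fintype_card, Fintype.card_subtype]
    congr 1
    ext s
    simp only [Finset.mem_filter]
    rfl
  have h1 := count_eq m μ σ
  have h2 := count_eq m μ σ'
  rw [key σ, key σ', ← Nat.cast_inj (R := ℤ), h1, h2, ← hτ]
  exact (sum_conj m μ τ σ).symm
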